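/- arXiv:2305.15613 — 2 statements merged into one kernel-verified Lean document; each statement's English description precedes it below -/
import Mathlib

section
/- (Fixed eigenvector of the representation.) For all R, R_O ∈ O(n), the representation matrix V = M_nᵀ · D(R_O) · D(R) · D(R_O)ᵀ · M_n fixes the all-ones vector: V · 𝟙_{n+1} = 𝟙_{n+1}, where 𝟙_{n+1} ∈ ℝ^{n+1} is the all-ones vector; equivalently, (1/√(n+1))·𝟙_{n+1} is an eigenvector of V with eigenvalue 1. -/
/-- κ = −(1+√(n+1))/n^{3/2} -/
noncomputable def simplexKappa (n : ℕ) : ℝ :=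
  -(1 + Real.sqrt (n + 1)) / (n : ℝ) ^ ((3 : ℝ) / 2)

/-- μ = √(1 + 1/n) -/
noncomputable def simplexMu (n : ℕ) : ℝ := Real.sqrt (1 + 1 / n)

/-- The vertices p_1, …, p_{n+1} ∈ ℝ^n of the regular n-simplex (0-indexed by `Fin (n+1)`):
`p_1 = n^{-1/2}·𝟙` and `p_i = κ·𝟙 + μ·e_{i-1}` for `2 ≤ i ≤ n+1`. -/
noncomputable def simplexVertex (n : ℕ) (i : Fin (n + 1)) : EuclideanSpace ℝ (Fin n) :=
  WithLp.toLp 2 fun (j : Fin n) =>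
    if (i : ℕ) = 0 then (n : ℝ) ^ (-(1 : ℝ) / 2)
    else simplexKappa n + (if (j : ℕ) = (i : ℕ) - 1 then simplexMu n else 0)

open Matrix

/-- The (n+1)×(n+1) change-of-basis matrix M_n whose i-th column is
m_i = (1/p)·(p_i, n^{-1/2}) with p = √(1 + 1/n). -/
noncomputable def simplexM (n : ℕ) : Matrix (Fin (n + 1)) (Fin (n + 1)) ℝ :=
  Matrix.of fun j i =>
    (Real.sqrt (1 + 1 / n))⁻¹ *
      (if h : (j : ℕ) < n then simplexVertex n i ⟨j, h⟩ else (n : ℝ) ^ (-(1 : ℝ) / 2))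
/-- D(A): the (n+1)×(n+1) block-diagonal matrix diag(A, 1), appending a 1 to the
diagonal of the n×n matrix A. -/
def blockDiag1 (n : ℕ) (A : Matrix (Fin n) (Fin n) ℝ) :
    Matrix (Fin (n + 1)) (Fin (n + 1)) ℝ :=
  Matrix.of fun i j =>
    if hi : (i : ℕ) < n then (if hj : (j : ℕ) < n then A ⟨i, hi⟩ ⟨j, hj⟩ else 0)
    else (if (i : ℕ) = (j : ℕ) then 1 else 0)

section auxRFO

private lemma rfo_sqrt_facts (n : ℕ) (hn : 1 ≤ n) :
    Real.sqrt (1 + 1 / n) = Real.sqrt (n + 1) / Real.sqrt n := by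
  have hn0 : (0:ℝ) < n := by exact_mod_cast Nat.pos_of_ne_zero (by omega)
  have h : (1 : ℝ) + 1 / n = ((n:ℝ) + 1) / n := by field_simp
  rw [h, Real.sqrt_div (by positivity)]

private lemma rfo_rpow_neg_half (n : ℕ) (hn : 1 ≤ n) :
    (n : ℝ) ^ (-(1:ℝ)/2) = (Real.sqrt n)⁻¹ := by
  have hn0 : (0:ℝ) ≤ n := by positivity
  rw [neg_div, Real.rpow_neg hn0, Real.sqrt_eq_rpow]

private lemma rfo_key1 (n : ℕ) (hn : 1 ≤ n) :
    (n : ℝ) ^ (-(1:ℝ)/2) + n * simplexKappa n + simplexMu n = 0 := by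
  have hn0 : (0:ℝ) < n := by exact_mod_cast Nat.pos_of_ne_zero (by omega)
  have ht : 0 < Real.sqrt n := Real.sqrt_pos.2 hn0
  have h3 : (n : ℝ) ^ ((3:ℝ)/2) = n * Real.sqrt n := by
    have h : (3:ℝ)/2 = 1 + 1/2 := by norm_num
    rw [h, Real.rpow_add hn0, Real.rpow_one, Real.sqrt_eq_rpow]
  rw [rfo_rpow_neg_half n hn, simplexKappa, simplexMu, rfo_sqrt_facts n hn, h3]
  field_simp
  ring

/-- `e` = the vector √(n+1)·e_last. -/
private noncomputable def rfoE (n : ℕ) : Fin (n+1) → ℝ :=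
  fun j => if (j : ℕ) = n then Real.sqrt (n + 1) else 0

private lemma rfo_M_ones (n : ℕ) (hn : 1 ≤ n) :
    (simplexM n).mulVec (fun _ => (1:ℝ)) = rfoE n := by
  have hn0 : (0:ℝ) < n := by exact_mod_cast Nat.pos_of_ne_zero (by omega)
  have ht : 0 < Real.sqrt n := Real.sqrt_pos.2 hn0
  have hs : 0 < Real.sqrt ((n:ℝ) + 1) := Real.sqrt_pos.2 (by positivity)
  funext j
  simp only [Matrix.mulVec, dotProduct, mul_one, simplexM, Matrix.of_apply, rfoE]
  by_cases hj : (j : ℕ) < n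
  · rw [if_neg (by omega)]
    simp only [dif_pos hj]
    rw [← Finset.mul_sum]
    have hsum : (∑ i : Fin (n+1), simplexVertex n i ⟨(j:ℕ), hj⟩) = 0 := by
      rw [Fin.sum_univ_succ]
      have h0 : simplexVertex n 0 ⟨(j:ℕ), hj⟩ = (n : ℝ) ^ (-(1:ℝ)/2) := by
        simp [simplexVertex]
      have h1 : ∀ i : Fin n, simplexVertex n i.succ ⟨(j:ℕ), hj⟩
          = simplexKappa n + (if (⟨(j:ℕ), hj⟩ : Fin n) = i then simplexMu n else 0) := by
        intro i
        simp only [simplexVertex, Fin.val_succ]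
        rw [if_neg (by omega)]
        congr 1
        simp [Fin.ext_iff]
      rw [h0]
      rw [Finset.sum_congr rfl (fun i _ => h1 i)]
      rw [Finset.sum_add_distrib, Finset.sum_const, Finset.sum_ite_eq]
      simp only [Finset.mem_univ, if_true, Finset.card_univ, Fintype.card_fin, nsmul_eq_mul]
      have := rfo_key1 n hn
      linarith
    rw [hsum, mul_zero]
  · rw [if_pos (by omega)]
    simp only [dif_neg hj]
    rw [Finset.sum_const, Finset.card_univ, Fintype.card_fin, nsmul_eq_mul]
    rw [rfo_rpow_neg_half n hn, rfo_sqrt_facts n hn]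
    push_cast
    rw [inv_div]
    have hss : Real.sqrt ((n:ℝ)+1) * Real.sqrt ((n:ℝ)+1) = (n:ℝ)+1 :=
      Real.mul_self_sqrt (by positivity)
    field_simp
    nlinarith [hss, ht, hs]

private lemma rfo_block_fix (n : ℕ) (A : Matrix (Fin n) (Fin n) ℝ) :
    (blockDiag1 n A).mulVec (rfoE n) = rfoE n := by
  funext i
  simp only [Matrix.mulVec, dotProduct, rfoE]
  have hcond : ∀ j : Fin (n+1), ((j:ℕ) = n) = (j = Fin.last n) := by
    intro j; simp [Fin.ext_iff, Fin.val_last]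
  simp only [hcond, mul_ite, mul_zero]
  rw [Finset.sum_ite_eq' Finset.univ (Fin.last n)]
  simp only [Finset.mem_univ, if_true, blockDiag1, Matrix.of_apply, Fin.val_last]
  by_cases hi : (i : ℕ) < n
  · rw [dif_pos hi, dif_neg (lt_irrefl n), zero_mul,
      if_neg (by simp only [Fin.ext_iff, Fin.val_last]; omega)]
  · have hb := i.isLt
    rw [dif_neg hi, if_pos (by omega), one_mul,
      if_pos (by simp only [Fin.ext_iff, Fin.val_last]; omega)]

private lemma rfo_blockT_fix (n : ℕ) (A : Matrix (Fin n) (Fin n) ℝ) :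
    (blockDiag1 n A)ᵀ.mulVec (rfoE n) = rfoE n := by
  funext i
  simp only [Matrix.mulVec, dotProduct, rfoE, Matrix.transpose_apply]
  have hcond : ∀ j : Fin (n+1), ((j:ℕ) = n) = (j = Fin.last n) := by
    intro j; simp [Fin.ext_iff, Fin.val_last]
  simp only [hcond, mul_ite, mul_zero]
  rw [Finset.sum_ite_eq' Finset.univ (Fin.last n)]
  simp only [Finset.mem_univ, if_true, blockDiag1, Matrix.of_apply, Fin.val_last]
  rw [dif_neg (lt_irrefl n)]
  have hb := i.isLt
  by_cases hi : (i : ℕ) < n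
  · rw [if_neg (by omega), zero_mul,
      if_neg (by simp only [Fin.ext_iff, Fin.val_last]; omega)]
  · rw [if_pos (by omega), one_mul,
      if_pos (by simp only [Fin.ext_iff, Fin.val_last]; omega)]

private lemma rfo_MT_e (n : ℕ) (hn : 1 ≤ n) :
    (simplexM n)ᵀ.mulVec (rfoE n) = fun _ => (1:ℝ) := by
  have hn0 : (0:ℝ) < n := by exact_mod_cast Nat.pos_of_ne_zero (by omega)
  have ht : 0 < Real.sqrt n := Real.sqrt_pos.2 hn0
  have hs : 0 < Real.sqrt ((n:ℝ) + 1) := Real.sqrt_pos.2 (by positivity)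
  funext i
  simp only [Matrix.mulVec, dotProduct, rfoE, Matrix.transpose_apply]
  have hcond : ∀ j : Fin (n+1), ((j:ℕ) = n) = (j = Fin.last n) := by
    intro j; simp [Fin.ext_iff, Fin.val_last]
  simp only [hcond, mul_ite, mul_zero]
  rw [Finset.sum_ite_eq' Finset.univ (Fin.last n)]
  simp only [Finset.mem_univ, if_true, simplexM, Matrix.of_apply, Fin.val_last]
  rw [dif_neg (lt_irrefl n)]
  rw [rfo_rpow_neg_half n hn, rfo_sqrt_facts n hn, inv_div]
  have hss : Real.sqrt ((n:ℝ)+1) * Real.sqrt ((n:ℝ)+1) = (n:ℝ)+1 :=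
    Real.mul_self_sqrt (by positivity)
  field_simp

end auxRFO

/-- (Fixed eigenvector of the representation.) For R, R_O ∈ O(n), the representation
V = M_nᵀ · D(R_O) · D(R) · D(R_O)ᵀ · M_n fixes the all-ones vector:
V · 𝟙_{n+1} = 𝟙_{n+1}; equivalently (1/√(n+1))·𝟙_{n+1} is an eigenvector of V with
eigenvalue 1. -/
theorem representation_fixes_ones (n : ℕ) (hn : 1 ≤ n)
    (R RO : Matrix (Fin n) (Fin n) ℝ) (hR : Rᵀ * R = 1) (hRO : ROᵀ * RO = 1) :
    ((simplexM n)ᵀ * blockDiag1 n RO * blockDiag1 n R * (blockDiag1 n RO)ᵀ *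
        simplexM n).mulVec (fun _ => (1 : ℝ)) = fun _ => (1 : ℝ) := by
  have h := rfo_M_ones n hn
  rw [← Matrix.mulVec_mulVec, ← Matrix.mulVec_mulVec, ← Matrix.mulVec_mulVec,
    ← Matrix.mulVec_mulVec, h, rfo_blockT_fix, rfo_block_fix, rfo_block_fix, rfo_MT_e n hn]
end

section
/- (Proposition: equivariant bias.) For every R ∈ O(n), every input X ∈ ℝ^{n+2}, and every scalar b ∈ ℝ, the biased output of the equivariant hypersphere is O(n)-equivariant: V · (B·X + b·𝟙_{n+1}) = B·(D₂(R)·X) + b·𝟙_{n+1}, where V = M_nᵀ · D(R_O · R · R_Oᵀ) · M_n and 𝟙_{n+1} ∈ ℝ^{n+1} is the all-ones vector. -/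
open Matrix

/-- D₂(A): the (n+2)×(n+2) block-diagonal matrix diag(A, 1, 1), appending two 1s to
the diagonal of the n×n matrix A. -/
def blockDiag2 (n : ℕ) (A : Matrix (Fin n) (Fin n) ℝ) :
    Matrix (Fin (n + 2)) (Fin (n + 2)) ℝ :=
  Matrix.of fun i j =>
    if hi : (i : ℕ) < n then (if hj : (j : ℕ) < n then A ⟨i, hi⟩ ⟨j, hj⟩ else 0)
    else (if (i : ℕ) = (j : ℕ) then 1 else 0)

/-- The filter-bank matrix B of the equivariant hypersphere: the (n+1)×(n+2) matrix
whose i-th row is ((R_Oᵀ · T_i · R_O)·c₀, s₁, s₂) ∈ ℝ^{n+2}. -/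
noncomputable def filterBank (n : ℕ) (c₀ : EuclideanSpace ℝ (Fin n)) (s₁ s₂ : ℝ)
    (RO : Matrix (Fin n) (Fin n) ℝ) (T : Fin (n + 1) → Matrix (Fin n) (Fin n) ℝ) :
    Matrix (Fin (n + 1)) (Fin (n + 2)) ℝ :=
  Matrix.of fun i j =>
    if h : (j : ℕ) < n then ((ROᵀ * T i * RO).mulVec c₀) ⟨j, h⟩
    else if (j : ℕ) = n then s₁ else s₂


/-! ### Auxiliary lemmas -/

section scalars
variable (n : ℕ)

lemma npos (hn : 1 ≤ n) : (0:ℝ) < n := by exact_mod_cast hn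

lemma sn_pos (hn : 1 ≤ n) : 0 < Real.sqrt n := Real.sqrt_pos.2 (npos n hn)

lemma sn_sq (hn : 1 ≤ n) : Real.sqrt n * Real.sqrt n = n :=
  Real.mul_self_sqrt (le_of_lt (npos n hn))

lemma rpow_neg_half (hn : 1 ≤ n) : (n : ℝ) ^ (-(1:ℝ)/2) = (Real.sqrt n)⁻¹ := by
  rw [neg_div, Real.rpow_neg (le_of_lt (npos n hn)), Real.sqrt_eq_rpow]

lemma mu_eq (hn : 1 ≤ n) : simplexMu n = Real.sqrt (n+1) / Real.sqrt n := by
  have h0 := npos n hn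
  rw [simplexMu, show (1 + 1/(n:ℝ)) = ((n:ℝ)+1)/n by field_simp,
    Real.sqrt_div (by positivity)]

lemma kappa_eq (hn : 1 ≤ n) :
    simplexKappa n = -(1 + Real.sqrt (n+1)) / ((n:ℝ) * Real.sqrt n) := by
  rw [simplexKappa]
  congr 1
  rw [show ((3:ℝ)/2) = 1 + (1/2 : ℝ) by norm_num, Real.rpow_add (npos n hn), Real.rpow_one,
    Real.sqrt_eq_rpow]

lemma E1 (hn : 1 ≤ n) :
    (Real.sqrt n)⁻¹ + (n:ℝ) * simplexKappa n + simplexMu n = 0 := by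
  rw [mu_eq n hn, kappa_eq n hn]
  have h0 := npos n hn
  have hs := sn_pos n hn
  field_simp
  ring

lemma E2 (hn : 1 ≤ n) :
    (n:ℝ) * (simplexKappa n * simplexKappa n) + 2 * (simplexKappa n * simplexMu n)
      = -(1/n) := by
  have h0 := npos n hn
  have hs := sn_pos n hn
  have ha : Real.sqrt n ^ 2 = n := Real.sq_sqrt (le_of_lt h0)
  have hb : Real.sqrt (1+(n:ℝ)) ^ 2 = 1 + n := Real.sq_sqrt (by positivity)
  rw [kappa_eq n hn, mu_eq n hn]
  field_simp
  ring_nf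
  linear_combination ha - hb

lemma E3 (hn : 1 ≤ n) : simplexMu n * simplexMu n = 1 + 1/(n:ℝ) := by
  apply Real.mul_self_sqrt; positivity

lemma E5 (hn : 1 ≤ n) :
    ((Real.sqrt (1+1/(n:ℝ)))⁻¹ * (Real.sqrt n)⁻¹) *
      (((Real.sqrt (1+1/(n:ℝ)))⁻¹ * (Real.sqrt n)⁻¹) * ((n:ℝ)+1)) = 1 := by
  have h0 := npos n hn
  have hs := sn_pos n hn
  have hp : (0:ℝ) < Real.sqrt (1+1/(n:ℝ)) := Real.sqrt_pos.2 (by positivity)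
  have hpp : Real.sqrt (1+1/(n:ℝ)) * Real.sqrt (1+1/(n:ℝ)) = 1+1/(n:ℝ) :=
    Real.mul_self_sqrt (by positivity)
  have hnn := sn_sq n hn
  have hb2 : Real.sqrt ((n:ℝ)+1) * Real.sqrt ((n:ℝ)+1) = (n:ℝ)+1 :=
    Real.mul_self_sqrt (by positivity)
  have hq2 : Real.sqrt (((n:ℝ)+1)/n) ^ 2 * n = n + 1 := by
    rw [Real.sq_sqrt (by positivity)]; field_simp
  field_simp
  linear_combination (-(Real.sqrt (((n:ℝ)+1)/n) ^ 2)) * hnn - hq2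

lemma E6 (hn : 1 ≤ n) :
    (Real.sqrt (1+1/(n:ℝ)))⁻¹ * ((Real.sqrt (1+1/(n:ℝ)))⁻¹ * (1+1/(n:ℝ))) = 1 := by
  have h0 := npos n hn
  have hp : (0:ℝ) < Real.sqrt (1+1/(n:ℝ)) := Real.sqrt_pos.2 (by positivity)
  have hpp : Real.sqrt (1+1/(n:ℝ)) * Real.sqrt (1+1/(n:ℝ)) = 1+1/(n:ℝ) :=
    Real.mul_self_sqrt (by positivity)
  have hb2 : Real.sqrt ((n:ℝ)+1) * Real.sqrt ((n:ℝ)+1) = (n:ℝ)+1 :=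
    Real.mul_self_sqrt (by positivity)
  have hnn := sn_sq n hn
  have hq2 : Real.sqrt (((n:ℝ)+1)/n) ^ 2 * n = n + 1 := by
    rw [Real.sq_sqrt (by positivity)]; field_simp
  field_simp
  linear_combination -hq2

end scalars

section sums
variable (n : ℕ)

lemma sv_zero (hn : 1 ≤ n) (j : Fin n) :
    simplexVertex n 0 j = (Real.sqrt n)⁻¹ := by
  simp [simplexVertex, rpow_neg_half n hn]

lemma sv_succ (i : Fin n) (j : Fin n) :
    simplexVertex n i.succ j
      = simplexKappa n + (if (j : ℕ) = (i : ℕ) then simplexMu n else 0) := by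
  simp [simplexVertex, Fin.val_succ]

lemma sum_sv (hn : 1 ≤ n) (j : Fin n) :
    ∑ i : Fin (n+1), simplexVertex n i j = 0 := by
  rw [Fin.sum_univ_succ, sv_zero n hn j]
  have h : ∀ i : Fin n, simplexVertex n i.succ j
      = simplexKappa n + (if j = i then simplexMu n else 0) := by
    intro i
    rw [sv_succ]
    congr 1
    simp [Fin.val_eq_val]
  rw [Finset.sum_congr rfl (fun i _ => h i), Finset.sum_add_distrib, Finset.sum_const,
    Finset.sum_ite_eq, if_pos (Finset.mem_univ j), Finset.card_univ, Fintype.card_fin,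
    nsmul_eq_mul]
  linarith [E1 n hn]

lemma delta_prod (hn : 1 ≤ n) (a b t : Fin n) :
    (simplexKappa n + if (a:ℕ) = (t:ℕ) then simplexMu n else 0) *
      (simplexKappa n + if (b:ℕ) = (t:ℕ) then simplexMu n else 0)
    = simplexKappa n * simplexKappa n
      + (if a = t then simplexKappa n * simplexMu n else 0)
      + (if b = t then simplexKappa n * simplexMu n else 0)
      + (if a = b then (if a = t then simplexMu n * simplexMu n else 0) else 0) := by
  simp only [Fin.val_eq_val]
  by_cases hab : a = b
  · subst hab
    split_ifs with h1 h2 <;> simp_all <;> ring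
  · split_ifs with h1 h2 h3 <;> simp_all <;> ring

lemma sum_delta_prod (hn : 1 ≤ n) (a b : Fin n) :
    ∑ t : Fin n, ((simplexKappa n + if (a:ℕ) = (t:ℕ) then simplexMu n else 0) *
      (simplexKappa n + if (b:ℕ) = (t:ℕ) then simplexMu n else 0))
    = -(1/(n:ℝ)) + (if a = b then simplexMu n * simplexMu n else 0) := by
  rw [Finset.sum_congr rfl (fun t _ => delta_prod n hn a b t)]
  rw [Finset.sum_add_distrib, Finset.sum_add_distrib, Finset.sum_add_distrib,
    Finset.sum_const, Finset.sum_ite_eq, Finset.sum_ite_eq, Finset.card_univ,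
    Fintype.card_fin, nsmul_eq_mul, if_pos (Finset.mem_univ a), if_pos (Finset.mem_univ b)]
  have h2 := E2 n hn
  by_cases hab : a = b
  · subst hab
    simp [Finset.sum_ite_eq]
    have hod : (1:ℝ)/n = (n:ℝ)⁻¹ := one_div _
    linarith
  · simp only [if_neg hab, Finset.sum_const_zero]
    linarith

lemma sum_sv_mul (hn : 1 ≤ n) (j k : Fin n) :
    ∑ i : Fin (n+1), simplexVertex n i j * simplexVertex n i k
      = (1 + 1/(n:ℝ)) * (if j = k then 1 else 0) := by
  rw [Fin.sum_univ_succ, sv_zero n hn j, sv_zero n hn k]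
  rw [Finset.sum_congr rfl (fun i _ => by rw [sv_succ n i j, sv_succ n i k])]
  rw [sum_delta_prod n hn j k]
  have h4 : (Real.sqrt n)⁻¹ * (Real.sqrt n)⁻¹ = 1/(n:ℝ) := by
    rw [← mul_inv, sn_sq n hn, one_div]
  rw [h4, E3 n hn]
  split_ifs <;> ring

lemma inner_sv (hn : 1 ≤ n) (i k : Fin (n+1)) :
    (∑ j : Fin n, simplexVertex n i j * simplexVertex n k j)
        + (Real.sqrt n)⁻¹ * (Real.sqrt n)⁻¹
      = if i = k then 1 + 1/(n:ℝ) else 0 := by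
  have h4 : (Real.sqrt n)⁻¹ * (Real.sqrt n)⁻¹ = 1/(n:ℝ) := by
    rw [← mul_inv, sn_sq n hn, one_div]
  have hsum0 : ∀ a : Fin n, ∑ j : Fin n,
      ((Real.sqrt n)⁻¹ * (simplexKappa n + if (j:ℕ) = (a:ℕ) then simplexMu n else 0))
      = (Real.sqrt n)⁻¹ * ((n:ℝ) * simplexKappa n + simplexMu n) := by
    intro a
    rw [← Finset.mul_sum, Finset.sum_add_distrib, Finset.sum_const, Finset.card_univ,
      Fintype.card_fin, nsmul_eq_mul]
    congr 2
    simp [Fin.val_eq_val, Finset.sum_ite_eq']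
  have hcross : (Real.sqrt n)⁻¹ * ((n:ℝ) * simplexKappa n + simplexMu n) = -(1/(n:ℝ)) := by
    have h1 := E1 n hn
    have : (n:ℝ) * simplexKappa n + simplexMu n = -(Real.sqrt n)⁻¹ := by linarith
    rw [this, mul_neg, h4]
  induction i using Fin.cases with
  | zero =>
    induction k using Fin.cases with
    | zero =>
      simp only [if_pos rfl]
      rw [Finset.sum_congr rfl (fun j _ => by rw [sv_zero n hn j])]
      rw [Finset.sum_const, Finset.card_univ, Fintype.card_fin, nsmul_eq_mul, h4]
      have h0 := npos n hn
      field_simp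
      rw [if_pos trivial]
      field_simp
    | succ k' =>
      rw [if_neg (by simp [Fin.ext_iff])]
      rw [Finset.sum_congr rfl (fun j _ => by rw [sv_zero n hn j, sv_succ n k' j])]
      rw [hsum0 k', hcross, h4]
      ring
  | succ i' =>
    induction k using Fin.cases with
    | zero =>
      rw [if_neg (by simp [Fin.ext_iff])]
      rw [Finset.sum_congr rfl (fun j _ => by
        rw [sv_zero n hn j, sv_succ n i' j, mul_comm])]
      rw [hsum0 i', hcross, h4]
      ring
    | succ k' =>
      rw [Finset.sum_congr rfl (fun j _ => by rw [sv_succ n i' j, sv_succ n k' j])]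
      have : ∀ j : Fin n,
          (simplexKappa n + if (j:ℕ) = (i':ℕ) then simplexMu n else 0) *
            (simplexKappa n + if (j:ℕ) = (k':ℕ) then simplexMu n else 0)
          = (simplexKappa n + if (i':ℕ) = (j:ℕ) then simplexMu n else 0) *
            (simplexKappa n + if (k':ℕ) = (j:ℕ) then simplexMu n else 0) := by
      
        intro j
        simp only [eq_comm]
      rw [Finset.sum_congr rfl (fun j _ => this j), sum_delta_prod n hn i' k', h4]
      simp only [Fin.succ_inj]
      split_ifs with h
      · rw [E3 n hn]; ring
      · ring
end sums

section mats
variable (n : ℕ)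

/-! entry lemmas -/

lemma simplexM_castSucc (j : Fin n) (i : Fin (n+1)) :
    simplexM n j.castSucc i
      = (Real.sqrt (1 + 1/(n:ℝ)))⁻¹ * simplexVertex n i j := by
  have hj : ((j.castSucc : Fin (n+1)) : ℕ) < n := by simpa using j.isLt
  simp only [simplexM, Matrix.of_apply, dif_pos hj]
  have he : (⟨((j.castSucc : Fin (n+1)) : ℕ), hj⟩ : Fin n) = j := Fin.ext (by simp)
  rw [he]

lemma simplexM_last (hn : 1 ≤ n) (i : Fin (n+1)) :
    simplexM n (Fin.last n) i
      = (Real.sqrt (1 + 1/(n:ℝ)))⁻¹ * (Real.sqrt n)⁻¹ := by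
  simp [simplexM, rpow_neg_half n hn]

variable (A : Matrix (Fin n) (Fin n) ℝ)

lemma bd1_cc (j l : Fin n) : blockDiag1 n A j.castSucc l.castSucc = A j l := by
  have hj : ((j.castSucc : Fin (n+1)) : ℕ) < n := by simpa using j.isLt
  have hl : ((l.castSucc : Fin (n+1)) : ℕ) < n := by simpa using l.isLt
  simp only [blockDiag1, Matrix.of_apply, dif_pos hj, dif_pos hl]
  congr 1 <;> exact Fin.ext (by simp)

lemma bd1_cl (j : Fin n) : blockDiag1 n A j.castSucc (Fin.last n) = 0 := by
  have hj : ((j.castSucc : Fin (n+1)) : ℕ) < n := by simpa using j.isLt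
  simp [blockDiag1, hj]

lemma bd1_lc (l : Fin n) : blockDiag1 n A (Fin.last n) l.castSucc = 0 := by
  have hl := l.isLt
  simp [blockDiag1]
  all_goals omega

lemma bd1_ll : blockDiag1 n A (Fin.last n) (Fin.last n) = 1 := by
  simp [blockDiag1]

lemma bd2_a (l k : Fin n) : blockDiag2 n A l.castSucc.castSucc k.castSucc.castSucc = A l k := by
  have hl : ((l.castSucc.castSucc : Fin (n+2)) : ℕ) < n := by simpa using l.isLt
  have hk : ((k.castSucc.castSucc : Fin (n+2)) : ℕ) < n := by simpa using k.isLt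
  simp only [blockDiag2, Matrix.of_apply, dif_pos hl, dif_pos hk]
  congr 1 <;> exact Fin.ext (by simp)

lemma bd2_b (l : Fin n) : blockDiag2 n A l.castSucc.castSucc (Fin.last n).castSucc = 0 := by
  have hl : ((l.castSucc.castSucc : Fin (n+2)) : ℕ) < n := by simpa using l.isLt
  simp [blockDiag2, hl]

lemma bd2_c (l : Fin n) : blockDiag2 n A l.castSucc.castSucc (Fin.last (n+1)) = 0 := by
  have hl : ((l.castSucc.castSucc : Fin (n+2)) : ℕ) < n := by simpa using l.isLt
  simp [blockDiag2, hl]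

lemma bd2_d (k : Fin n) : blockDiag2 n A (Fin.last n).castSucc k.castSucc.castSucc = 0 := by
  have hk := k.isLt
  simp [blockDiag2]
  all_goals omega

lemma bd2_e : blockDiag2 n A (Fin.last n).castSucc (Fin.last n).castSucc = 1 := by
  simp [blockDiag2]

lemma bd2_f : blockDiag2 n A (Fin.last n).castSucc (Fin.last (n+1)) = 0 := by
  simp [blockDiag2]

lemma bd2_g (k : Fin n) : blockDiag2 n A (Fin.last (n+1)) k.castSucc.castSucc = 0 := by
  have hk := k.isLt
  simp [blockDiag2]
  all_goals omega

lemma bd2_h : blockDiag2 n A (Fin.last (n+1)) (Fin.last n).castSucc = 0 := by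
  simp [blockDiag2]

lemma bd2_i : blockDiag2 n A (Fin.last (n+1)) (Fin.last (n+1)) = 1 := by
  simp [blockDiag2]

end mats

section prod
variable (n : ℕ)

noncomputable def auxMB (n : ℕ) (c s₁ s₂ : ℝ) (RO : Matrix (Fin n) (Fin n) ℝ) :
    Matrix (Fin (n+1)) (Fin (n+2)) ℝ :=
  Matrix.of fun j k =>
    if hj : (j:ℕ) < n then
      (if hk : (k:ℕ) < n then
        (Real.sqrt (1+1/(n:ℝ)))⁻¹ * (c * ((1+1/(n:ℝ)) * RO ⟨j,hj⟩ ⟨k,hk⟩)) else 0)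
    else if (k:ℕ) < n then 0
      else (Real.sqrt (1+1/(n:ℝ)))⁻¹ *
        ((Real.sqrt n)⁻¹ * (((n:ℝ)+1) * (if (k:ℕ) = n then s₁ else s₂)))

variable (c s₁ s₂ : ℝ) (RO : Matrix (Fin n) (Fin n) ℝ)

lemma amb_cc (j : Fin n) (k : Fin n) :
    auxMB n c s₁ s₂ RO j.castSucc k.castSucc.castSucc
      = (Real.sqrt (1+1/(n:ℝ)))⁻¹ * (c * ((1+1/(n:ℝ)) * RO j k)) := by
  have hj : ((j.castSucc : Fin (n+1)) : ℕ) < n := by simpa using j.isLt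
  have hk : ((k.castSucc.castSucc : Fin (n+2)) : ℕ) < n := by simpa using k.isLt
  simp only [auxMB, Matrix.of_apply, dif_pos hj, dif_pos hk]
  have he1 : (⟨((j.castSucc : Fin (n+1)) : ℕ), hj⟩ : Fin n) = j := Fin.ext (by simp)
  have he2 : (⟨((k.castSucc.castSucc : Fin (n+2)) : ℕ), hk⟩ : Fin n) = k := Fin.ext (by simp)
  rw [he1, he2]

lemma amb_cn (j : Fin n) :
    auxMB n c s₁ s₂ RO j.castSucc (Fin.last n).castSucc = 0 := by
  have hj : ((j.castSucc : Fin (n+1)) : ℕ) < n := by simpa using j.isLt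
  simp [auxMB, hj]

lemma amb_cn1 (j : Fin n) :
    auxMB n c s₁ s₂ RO j.castSucc (Fin.last (n+1)) = 0 := by
  have hj : ((j.castSucc : Fin (n+1)) : ℕ) < n := by simpa using j.isLt
  simp [auxMB, hj]

lemma amb_lc (k : Fin n) :
    auxMB n c s₁ s₂ RO (Fin.last n) k.castSucc.castSucc = 0 := by
  have hk : ((k.castSucc.castSucc : Fin (n+2)) : ℕ) < n := by simpa using k.isLt
  simp [auxMB, hk]

lemma amb_ln :
    auxMB n c s₁ s₂ RO (Fin.last n) (Fin.last n).castSucc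
      = (Real.sqrt (1+1/(n:ℝ)))⁻¹ * ((Real.sqrt n)⁻¹ * (((n:ℝ)+1) * s₁)) := by
  simp [auxMB]

lemma amb_ln1 :
    auxMB n c s₁ s₂ RO (Fin.last n) (Fin.last (n+1))
      = (Real.sqrt (1+1/(n:ℝ)))⁻¹ * ((Real.sqrt n)⁻¹ * (((n:ℝ)+1) * s₂)) := by
  simp [auxMB]

end prod

section fb
variable (n : ℕ) (c₀ : EuclideanSpace ℝ (Fin n)) (s₁ s₂ : ℝ)
  (RO : Matrix (Fin n) (Fin n) ℝ) (T : Fin (n + 1) → Matrix (Fin n) (Fin n) ℝ)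

lemma fb_apply (hTc : ∀ i, (T i).mulVec (RO.mulVec c₀) = ‖c₀‖ • simplexVertex n i)
    (i : Fin (n+1)) (k : Fin (n+2)) :
    filterBank n c₀ s₁ s₂ RO T i k
      = if hk : (k : ℕ) < n then
          ‖c₀‖ * ∑ m, RO m ⟨k, hk⟩ * simplexVertex n i m
        else if (k : ℕ) = n then s₁ else s₂ := by
  simp only [filterBank, Matrix.of_apply]
  by_cases hk : (k : ℕ) < n
  · rw [dif_pos hk, dif_pos hk]
    have h1 : (ROᵀ * T i * RO).mulVec c₀
        = ROᵀ.mulVec ((T i).mulVec (RO.mulVec c₀)) := by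
      rw [Matrix.mulVec_mulVec, Matrix.mulVec_mulVec, Matrix.mul_assoc]
    rw [h1, hTc i, Matrix.mulVec_smul]
    simp only [Pi.smul_apply, smul_eq_mul, Matrix.mulVec, dotProduct,
      Matrix.transpose_apply]
  · rw [dif_neg hk, dif_neg hk]
end fb

section fb2
variable (n : ℕ) (c₀ : EuclideanSpace ℝ (Fin n)) (s₁ s₂ : ℝ)
  (RO : Matrix (Fin n) (Fin n) ℝ) (T : Fin (n + 1) → Matrix (Fin n) (Fin n) ℝ)

lemma fb_c (hTc : ∀ i, (T i).mulVec (RO.mulVec c₀) = ‖c₀‖ • simplexVertex n i)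
    (i : Fin (n+1)) (k : Fin n) :
    filterBank n c₀ s₁ s₂ RO T i k.castSucc.castSucc
      = ‖c₀‖ * ∑ m, RO m k * simplexVertex n i m := by
  have hk : ((k.castSucc.castSucc : Fin (n+2)) : ℕ) < n := by simpa using k.isLt
  have he : (⟨((k.castSucc.castSucc : Fin (n+2)) : ℕ), hk⟩ : Fin n) = k := Fin.ext (by simp)
  rw [fb_apply n c₀ s₁ s₂ RO T hTc, dif_pos hk, he]

lemma fb_n (i : Fin (n+1)) :
    filterBank n c₀ s₁ s₂ RO T i (Fin.last n).castSucc = s₁ := by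
  simp [filterBank]

lemma fb_n1 (i : Fin (n+1)) :
    filterBank n c₀ s₁ s₂ RO T i (Fin.last (n+1)) = s₂ := by
  simp [filterBank]

lemma MB_eq (hn : 1 ≤ n)
    (hTc : ∀ i, (T i).mulVec (RO.mulVec c₀) = ‖c₀‖ • simplexVertex n i) :
    simplexM n * filterBank n c₀ s₁ s₂ RO T = auxMB n ‖c₀‖ s₁ s₂ RO := by
  ext j k
  rw [Matrix.mul_apply]
  induction j using Fin.lastCases with
  | cast j =>
    induction k using Fin.lastCases with
    | cast k' =>
      induction k' using Fin.lastCases with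
      | cast k =>
        simp only [simplexM_castSucc, fb_c n c₀ s₁ s₂ RO T hTc, amb_cc]
        trans ∑ i : Fin (n+1), ∑ m : Fin n,
            ((Real.sqrt (1+1/(n:ℝ)))⁻¹ * ‖c₀‖ * RO m k) *
              (simplexVertex n i j * simplexVertex n i m)
        · refine Finset.sum_congr rfl fun i _ => ?_
          rw [Finset.mul_sum, Finset.mul_sum]
          exact Finset.sum_congr rfl fun m _ => by ring
        rw [Finset.sum_comm]
        trans ∑ m : Fin n, ((Real.sqrt (1+1/(n:ℝ)))⁻¹ * ‖c₀‖ * RO m k) *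
            ((1 + 1/(n:ℝ)) * if j = m then 1 else 0)
        · refine Finset.sum_congr rfl fun m _ => ?_
          rw [← Finset.mul_sum, sum_sv_mul n hn j m]
        simp only [mul_ite, mul_one, mul_zero, Finset.sum_ite_eq, Finset.mem_univ, if_true]
        ring
      | last =>
        simp only [simplexM_castSucc, fb_n, amb_cn]
        trans (∑ i : Fin (n+1), simplexVertex n i j) * ((Real.sqrt (1+1/(n:ℝ)))⁻¹ * s₁)
        · rw [Finset.sum_mul]
          exact Finset.sum_congr rfl fun i _ => by ring
        rw [sum_sv n hn j, zero_mul]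
    | last =>
      simp only [simplexM_castSucc, fb_n1, amb_cn1]
      trans (∑ i : Fin (n+1), simplexVertex n i j) * ((Real.sqrt (1+1/(n:ℝ)))⁻¹ * s₂)
      · rw [Finset.sum_mul]
        exact Finset.sum_congr rfl fun i _ => by ring
      rw [sum_sv n hn j, zero_mul]
  | last =>
    induction k using Fin.lastCases with
    | cast k' =>
      induction k' using Fin.lastCases with
      | cast k =>
        simp only [simplexM_last n hn, fb_c n c₀ s₁ s₂ RO T hTc, amb_lc]
        trans ∑ i : Fin (n+1), ∑ m : Fin n,
            ((Real.sqrt (1+1/(n:ℝ)))⁻¹ * (Real.sqrt n)⁻¹ * ‖c₀‖ * RO m k) *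
              simplexVertex n i m
        · refine Finset.sum_congr rfl fun i _ => ?_
          rw [Finset.mul_sum, Finset.mul_sum]
          exact Finset.sum_congr rfl fun m _ => by ring
        rw [Finset.sum_comm]
        refine Finset.sum_eq_zero fun m _ => ?_
        rw [← Finset.mul_sum, sum_sv n hn m, mul_zero]
      | last =>
        simp only [simplexM_last n hn, fb_n, amb_ln]
        rw [Finset.sum_const, Finset.card_univ, Fintype.card_fin, nsmul_eq_mul]
        push_cast
        ring
    | last =>
      simp only [simplexM_last n hn, fb_n1, amb_ln1]
      rw [Finset.sum_const, Finset.card_univ, Fintype.card_fin, nsmul_eq_mul]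
      push_cast
      ring

lemma MtM (hn : 1 ≤ n) : (simplexM n)ᵀ * simplexM n = 1 := by
  ext i k
  rw [Matrix.mul_apply, Matrix.one_apply]
  simp only [Matrix.transpose_apply]
  rw [Fin.sum_univ_castSucc]
  simp only [simplexM_castSucc, simplexM_last n hn]
  have h1 : ∑ j : Fin n, ((Real.sqrt (1+1/(n:ℝ)))⁻¹ * simplexVertex n i j) *
        ((Real.sqrt (1+1/(n:ℝ)))⁻¹ * simplexVertex n k j)
      = ((Real.sqrt (1+1/(n:ℝ)))⁻¹ * (Real.sqrt (1+1/(n:ℝ)))⁻¹) *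
        ∑ j : Fin n, simplexVertex n i j * simplexVertex n k j := by
    rw [Finset.mul_sum]
    exact Finset.sum_congr rfl fun j _ => by ring
  rw [h1]
  have h2 := inner_sv n hn i k
  have h6 := E6 n hn
  calc ((Real.sqrt (1+1/(n:ℝ)))⁻¹ * (Real.sqrt (1+1/(n:ℝ)))⁻¹) *
          (∑ j : Fin n, simplexVertex n i j * simplexVertex n k j)
        + ((Real.sqrt (1+1/(n:ℝ)))⁻¹ * (Real.sqrt n)⁻¹) *
          ((Real.sqrt (1+1/(n:ℝ)))⁻¹ * (Real.sqrt n)⁻¹)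
      = ((Real.sqrt (1+1/(n:ℝ)))⁻¹ * (Real.sqrt (1+1/(n:ℝ)))⁻¹) *
          ((∑ j : Fin n, simplexVertex n i j * simplexVertex n k j)
            + (Real.sqrt n)⁻¹ * (Real.sqrt n)⁻¹) := by ring
    _ = ((Real.sqrt (1+1/(n:ℝ)))⁻¹ * (Real.sqrt (1+1/(n:ℝ)))⁻¹) *
          (if i = k then 1 + 1/(n:ℝ) else 0) := by rw [h2]
    _ = (if i = k then (1:ℝ) else 0) := by
        split_ifs with h
        · linear_combination h6
        · rw [mul_zero]

lemma DMB_comm (hn : 1 ≤ n) (c s₁ s₂ : ℝ) (RO R : Matrix (Fin n) (Fin n) ℝ)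
    (hRO : ROᵀ * RO = 1) :
    blockDiag1 n (RO * R * ROᵀ) * auxMB n c s₁ s₂ RO
      = auxMB n c s₁ s₂ RO * blockDiag2 n R := by
  have hmulm : (RO * R * ROᵀ) * RO = RO * R := by
    rw [Matrix.mul_assoc (RO * R) ROᵀ RO, hRO, Matrix.mul_one]
  ext j k
  rw [Matrix.mul_apply, Matrix.mul_apply]
  conv_lhs => rw [Fin.sum_univ_castSucc]
  conv_rhs => rw [Fin.sum_univ_castSucc, Fin.sum_univ_castSucc]
  induction j using Fin.lastCases with
  | cast j =>
    induction k using Fin.lastCases with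
    | cast k' =>
      induction k' using Fin.lastCases with
      | cast k =>
        simp only [bd1_cc, bd1_cl, amb_cc, amb_cn, amb_cn1, bd2_a, bd2_d, bd2_g,
          zero_mul, mul_zero, add_zero]
        calc ∑ l : Fin n, (RO * R * ROᵀ) j l *
                ((Real.sqrt (1+1/(n:ℝ)))⁻¹ * (c * ((1+1/(n:ℝ)) * RO l k)))
            = ((Real.sqrt (1+1/(n:ℝ)))⁻¹ * (c * (1+1/(n:ℝ)))) *
                ∑ l : Fin n, (RO * R * ROᵀ) j l * RO l k := by
              rw [Finset.mul_sum]
              exact Finset.sum_congr rfl fun l _ => by ring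
          _ = ((Real.sqrt (1+1/(n:ℝ)))⁻¹ * (c * (1+1/(n:ℝ)))) * ((RO * R * ROᵀ) * RO) j k := by
              rw [Matrix.mul_apply]
          _ = ((Real.sqrt (1+1/(n:ℝ)))⁻¹ * (c * (1+1/(n:ℝ)))) * (RO * R) j k := by
              rw [hmulm]
          _ = ((Real.sqrt (1+1/(n:ℝ)))⁻¹ * (c * (1+1/(n:ℝ)))) *
                ∑ l : Fin n, RO j l * R l k := by rw [Matrix.mul_apply]
          _ = ∑ l : Fin n, ((Real.sqrt (1+1/(n:ℝ)))⁻¹ * (c * ((1+1/(n:ℝ)) * RO j l))) * R l k := by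
              rw [Finset.mul_sum]
              exact Finset.sum_congr rfl fun l _ => by ring
      | last =>
        simp only [bd1_cc, bd1_cl, amb_cc, amb_cn, amb_cn1, bd2_b, bd2_e, bd2_h,
          zero_mul, mul_zero, mul_one, add_zero, zero_add, Finset.sum_const_zero]
    | last =>
      simp only [bd1_cc, bd1_cl, amb_cc, amb_cn, amb_cn1, bd2_c, bd2_f, bd2_i,
        zero_mul, mul_zero, mul_one, add_zero, zero_add, Finset.sum_const_zero]
  | last =>
    induction k using Fin.lastCases with
    | cast k' =>
      induction k' using Fin.lastCases with
      | cast k =>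
        simp only [bd1_lc, bd1_ll, amb_lc, amb_ln, amb_ln1, bd2_a, bd2_d, bd2_g,
          zero_mul, mul_zero, mul_one, one_mul, add_zero, zero_add, Finset.sum_const_zero]
      | last =>
        simp only [bd1_lc, bd1_ll, amb_lc, amb_ln, amb_ln1, bd2_b, bd2_e, bd2_h,
          zero_mul, mul_zero, mul_one, one_mul, add_zero, zero_add, Finset.sum_const_zero]
    | last =>
      simp only [bd1_lc, bd1_ll, amb_lc, amb_ln, amb_ln1, bd2_c, bd2_f, bd2_i,
        zero_mul, mul_zero, mul_one, one_mul, add_zero, zero_add, Finset.sum_const_zero]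

lemma Vone (hn : 1 ≤ n) (A : Matrix (Fin n) (Fin n) ℝ) :
    ((simplexM n)ᵀ * blockDiag1 n A * simplexM n).mulVec (fun _ => (1:ℝ))
      = fun _ => (1:ℝ) := by
  set w : Fin (n+1) → ℝ := fun j =>
    if (j:ℕ) < n then 0
    else (Real.sqrt (1+1/(n:ℝ)))⁻¹ * ((Real.sqrt n)⁻¹ * ((n:ℝ)+1)) with hwdef
  have hwc : ∀ j : Fin n, w j.castSucc = 0 := by
    intro j
    simp [hwdef, j.isLt]
  have hwl : w (Fin.last n) = (Real.sqrt (1+1/(n:ℝ)))⁻¹ * ((Real.sqrt n)⁻¹ * ((n:ℝ)+1)) := by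
    simp [hwdef]
  have h1 : (simplexM n).mulVec (fun _ => (1:ℝ)) = w := by
    ext j
    simp only [Matrix.mulVec, dotProduct, mul_one]
    induction j using Fin.lastCases with
    | cast j =>
      rw [hwc j]
      simp only [simplexM_castSucc]
      rw [← Finset.mul_sum, sum_sv n hn j, mul_zero]
    | last =>
      rw [hwl]
      simp only [simplexM_last n hn]
      rw [Finset.sum_const, Finset.card_univ, Fintype.card_fin, nsmul_eq_mul]
      push_cast
      ring
  have h2 : (blockDiag1 n A).mulVec w = w := by
    ext j
    simp only [Matrix.mulVec, dotProduct]
    rw [Fin.sum_univ_castSucc]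
    induction j using Fin.lastCases with
    | cast j =>
      rw [hwc j]
      simp only [hwc, bd1_cl, mul_zero, zero_mul, add_zero, Finset.sum_const_zero]
    | last =>
      rw [hwl]
      simp only [hwc, bd1_lc, bd1_ll, mul_zero, zero_mul, one_mul, add_zero, zero_add,
        Finset.sum_const_zero, hwl]
  have h3 : (simplexM n)ᵀ.mulVec w = fun _ => (1:ℝ) := by
    ext i
    simp only [Matrix.mulVec, dotProduct, Matrix.transpose_apply]
    rw [Fin.sum_univ_castSucc]
    simp only [hwc, hwl, mul_zero, Finset.sum_const_zero, zero_add, simplexM_last n hn]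
    linear_combination E5 n hn
  rw [← Matrix.mulVec_mulVec, ← Matrix.mulVec_mulVec, h1, h2, h3]

end fb2


/-- (Proposition: equivariant bias.) For every R ∈ O(n), every input X ∈ ℝ^{n+2} and
every scalar b ∈ ℝ: V · (B·X + b·𝟙_{n+1}) = B·(D₂(R)·X) + b·𝟙_{n+1}, where
V = M_nᵀ · D(R_O · R · R_Oᵀ) · M_n. -/
theorem equivariant_bias (n : ℕ) (hn : 1 ≤ n)
    (c₀ : EuclideanSpace ℝ (Fin n)) (s₁ s₂ : ℝ)
    (RO : Matrix (Fin n) (Fin n) ℝ) (hRO : ROᵀ * RO = 1)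
    (T : Fin (n + 1) → Matrix (Fin n) (Fin n) ℝ) (hT : ∀ i, (T i)ᵀ * T i = 1)
    (hTc : ∀ i, (T i).mulVec (RO.mulVec c₀) = ‖c₀‖ • simplexVertex n i)
    (R : Matrix (Fin n) (Fin n) ℝ) (hR : Rᵀ * R = 1)
    (X : Fin (n + 2) → ℝ) (b : ℝ) :
    ((simplexM n)ᵀ * blockDiag1 n (RO * R * ROᵀ) * simplexM n).mulVec
        ((filterBank n c₀ s₁ s₂ RO T).mulVec X + b • fun _ => (1 : ℝ)) =
      (filterBank n c₀ s₁ s₂ RO T).mulVec ((blockDiag2 n R).mulVec X) +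
        b • fun _ => (1 : ℝ) := by
  have hmb := MB_eq n c₀ s₁ s₂ RO T hn hTc
  have hVB : (simplexM n)ᵀ * blockDiag1 n (RO * R * ROᵀ) * simplexM n *
      filterBank n c₀ s₁ s₂ RO T = filterBank n c₀ s₁ s₂ RO T * blockDiag2 n R := by
    calc (simplexM n)ᵀ * blockDiag1 n (RO * R * ROᵀ) * simplexM n * filterBank n c₀ s₁ s₂ RO T
        = (simplexM n)ᵀ * blockDiag1 n (RO * R * ROᵀ) *
            (simplexM n * filterBank n c₀ s₁ s₂ RO T) := Matrix.mul_assoc _ _ _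
      _ = (simplexM n)ᵀ * (blockDiag1 n (RO * R * ROᵀ) *
            (simplexM n * filterBank n c₀ s₁ s₂ RO T)) := Matrix.mul_assoc _ _ _
      _ = (simplexM n)ᵀ * (blockDiag1 n (RO * R * ROᵀ) * auxMB n ‖c₀‖ s₁ s₂ RO) := by
          rw [hmb]
      _ = (simplexM n)ᵀ * (auxMB n ‖c₀‖ s₁ s₂ RO * blockDiag2 n R) := by
          rw [DMB_comm n hn ‖c₀‖ s₁ s₂ RO R hRO]
      _ = (simplexM n)ᵀ * ((simplexM n * filterBank n c₀ s₁ s₂ RO T) * blockDiag2 n R) := by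
          rw [hmb]
      _ = (simplexM n)ᵀ * (simplexM n * (filterBank n c₀ s₁ s₂ RO T * blockDiag2 n R)) := by
          rw [Matrix.mul_assoc]
      _ = ((simplexM n)ᵀ * simplexM n) * (filterBank n c₀ s₁ s₂ RO T * blockDiag2 n R) :=
          (Matrix.mul_assoc _ _ _).symm
      _ = filterBank n c₀ s₁ s₂ RO T * blockDiag2 n R := by
          rw [MtM n hn, Matrix.one_mul]
  rw [Matrix.mulVec_add, Matrix.mulVec_smul, Vone n hn, Matrix.mulVec_mulVec, hVB,
    ← Matrix.mulVec_mulVec]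
end
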